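/- Let C be a 3×3 unitary matrix with entries a^{(i,j)}, e^{iΔ} = det C, and λ ∈ ℝ with e^{iλ} ≠ a^{(2,2)}. Then A(λ) = (a^{(1,1)}e^{iλ} − e^{iΔ} conj(a^{(3,3)}))/(e^{iλ} − a^{(2,2)}), B(λ) = (a^{(1,3)}e^{iλ} + e^{iΔ} conj(a^{(3,1)}))/(e^{iλ} − a^{(2,2)}), C(λ) = (a^{(3,1)}e^{iλ} + e^{iΔ} conj(a^{(1,3)}))/(e^{iλ} − a^{(2,2)}), and D(λ) = (a^{(3,3)}e^{iλ} − e^{iΔ} conj(a^{(1,1)}))/(e^{iλ} − a^{(2,2)}). -/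

import Mathlib

open Complex Matrix ComplexConjugate

noncomputable section

/-- `A(λ)` for a 3×3 coin matrix `M`. -/
def coefA (M : Matrix (Fin 3) (Fin 3) ℂ) (lam : ℝ) : ℂ :=
  M 0 0 + M 0 1 * M 1 0 / (Complex.exp (lam * Complex.I) - M 1 1)

/-- `B(λ)` for a 3×3 coin matrix `M`. -/
def coefB (M : Matrix (Fin 3) (Fin 3) ℂ) (lam : ℝ) : ℂ :=
  M 0 2 + M 0 1 * M 1 2 / (Complex.exp (lam * Complex.I) - M 1 1)

/-- `C(λ)` for a 3×3 coin matrix `M`. -/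
def coefC (M : Matrix (Fin 3) (Fin 3) ℂ) (lam : ℝ) : ℂ :=
  M 2 0 + M 2 1 * M 1 0 / (Complex.exp (lam * Complex.I) - M 1 1)

/-- `D(λ)` for a 3×3 coin matrix `M`. -/
def coefD (M : Matrix (Fin 3) (Fin 3) ℂ) (lam : ℝ) : ℂ :=
  M 2 2 + M 2 1 * M 1 2 / (Complex.exp (lam * Complex.I) - M 1 1)

/-- simplified expressions of `A(λ), B(λ), C(λ), D(λ)` for a
3×3 unitary coin `M`, where `e^{iΔ} = det M`. -/
theorem coef_formulas (M : Matrix (Fin 3) (Fin 3) ℂ)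
    (hM : M ∈ Matrix.unitaryGroup (Fin 3) ℂ) (lam : ℝ)
    (hne : Complex.exp (lam * Complex.I) ≠ M 1 1) :
    coefA M lam =
      (M 0 0 * Complex.exp (lam * Complex.I) - M.det * conj (M 2 2)) /
        (Complex.exp (lam * Complex.I) - M 1 1) ∧
    coefB M lam =
      (M 0 2 * Complex.exp (lam * Complex.I) + M.det * conj (M 2 0)) /
        (Complex.exp (lam * Complex.I) - M 1 1) ∧
    coefC M lam =
      (M 2 0 * Complex.exp (lam * Complex.I) + M.det * conj (M 0 2)) /
        (Complex.exp (lam * Complex.I) - M 1 1) ∧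
    coefD M lam =
      (M 2 2 * Complex.exp (lam * Complex.I) - M.det * conj (M 0 0)) /
        (Complex.exp (lam * Complex.I) - M 1 1) := by
  have hsub : Complex.exp (lam * Complex.I) - M 1 1 ≠ 0 := sub_ne_zero.mpr hne
  have h1 : star M * M = 1 := (Matrix.mem_unitaryGroup_iff'.mp hM)
  have hadj : M.adjugate = M.det • star M := by
    calc M.adjugate = 1 * M.adjugate := (one_mul _).symm
      _ = star M * M * M.adjugate := by rw [h1]
      _ = star M * (M * M.adjugate) := by rw [mul_assoc]
      _ = star M * (M.det • 1) := by rw [Matrix.mul_adjugate]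
      _ = M.det • star M := by rw [mul_smul_comm, mul_one]
  have key : ∀ i j : Fin 3, M.adjugate i j = M.det * conj (M j i) := by
    intro i j
    rw [hadj]
    simp [Matrix.smul_apply, Matrix.star_apply]
  have e22 := key 2 2
  have e02 := key 0 2
  have e20 := key 2 0
  have e00 := key 0 0
  simp only [Matrix.adjugate_fin_three] at e22 e02 e20 e00
  norm_num [Matrix.cons_val_zero, Matrix.cons_val_one, Matrix.cons_val_two, Matrix.tail_cons, Matrix.head_cons, Matrix.cons_val] at e22 e02 e20 e00
  refine ⟨?_, ?_, ?_, ?_⟩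
  · rw [coefA]; field_simp; linear_combination -e22
  · rw [coefB]; field_simp; linear_combination e02
  · rw [coefC]; field_simp; linear_combination e20
  · rw [coefD]; field_simp; linear_combination -e00
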